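/- For n ≥ 4, the overlap number of the cycle C_n on n vertices equals n − 1. -/

import Mathlib

/-- Two finite sets overlap: they intersect and neither contains the other. -/
def Overlaps (A B : Finset ℕ) : Prop :=
  (A ∩ B).Nonempty ∧ ¬ A ⊆ B ∧ ¬ B ⊆ A

/-- An overlap representation of a graph: nonempty sets assigned to vertices such that
two vertices are adjacent iff their sets overlap. -/
def IsOverlapRep {V : Type*} (G : SimpleGraph V) (S : V → Finset ℕ) : Prop :=
  (∀ v, (S v).Nonempty) ∧ ∀ u v, G.Adj u v ↔ Overlaps (S u) (S v)

/-- The overlap number: the minimum number of elements used in an overlap representation. -/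
noncomputable def overlapNumber {V : Type*} (G : SimpleGraph V) : ℕ :=
  sInf {n | ∃ S : V → Finset ℕ, IsOverlapRep G S ∧ (⋃ v, (S v : Set ℕ)).ncard = n}

namespace OvPath

open Finset

lemma ov_symm {A B : Finset ℕ} (h : Overlaps A B) : Overlaps B A :=
  ⟨by rw [Finset.inter_comm]; exact h.1, h.2.2, h.2.1⟩

lemma not_ov_cases {A B : Finset ℕ} (h : ¬ Overlaps A B) (hne : (A ∩ B).Nonempty) :
    A ⊆ B ∨ B ⊆ A := by
  by_contra hc
  push_neg at hc
  exact h ⟨hne, hc.1, hc.2⟩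

/-- A path representation: `m` nonempty sets, consecutive ones overlap,
non-consecutive ones don't. -/
def PR (C : ℕ → Finset ℕ) (m : ℕ) : Prop :=
  (∀ i, i < m → (C i).Nonempty) ∧
  (∀ i, i + 1 < m → Overlaps (C i) (C (i+1))) ∧
  (∀ i j, i + 2 ≤ j → j < m → ¬ Overlaps (C i) (C j))

/-- Union of the representation. -/
def UU (C : ℕ → Finset ℕ) (m : ℕ) : Finset ℕ := (Finset.range m).biUnion C

lemma mem_UU {C : ℕ → Finset ℕ} {m x} : x ∈ UU C m ↔ ∃ i, i < m ∧ x ∈ C i := by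
  simp [UU, Finset.mem_biUnion, Finset.mem_range]

lemma subset_UU {C : ℕ → Finset ℕ} {m i} (hi : i < m) : C i ⊆ UU C m :=
  fun x hx => mem_UU.2 ⟨i, hi, hx⟩

lemma UU_mono {C : ℕ → Finset ℕ} {m m'} (h : m ≤ m') : UU C m ⊆ UU C m' := by
  intro x hx; rcases mem_UU.1 hx with ⟨i, hi, hxi⟩; exact mem_UU.2 ⟨i, lt_of_lt_of_le hi h, hxi⟩

lemma UU_succ {C : ℕ → Finset ℕ} {m} : UU C (m+1) = UU C m ∪ C m := by
  ext x
  simp only [mem_UU, Finset.mem_union]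
  constructor
  · rintro ⟨i, hi, hx⟩
    rcases Nat.lt_succ_iff_lt_or_eq.1 hi with h | rfl
    · exact Or.inl ⟨i, h, hx⟩
    · exact Or.inr hx
  · rintro (⟨i, hi, hx⟩ | hx)
    · exact ⟨i, Nat.lt_succ_of_lt hi, hx⟩
    · exact ⟨m, Nat.lt_succ_self m, hx⟩

lemma PR.mono {C : ℕ → Finset ℕ} {m m'} (h : PR C m) (hle : m' ≤ m) : PR C m' :=
  ⟨fun i hi => h.1 i (lt_of_lt_of_le hi hle),
   fun i hi => h.2.1 i (lt_of_lt_of_le hi hle),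
   fun i j hij hj => h.2.2 i j hij (lt_of_lt_of_le hj hle)⟩

lemma PR.segment {C : ℕ → Finset ℕ} {m} (h : PR C m) (s t : ℕ) (hst : s + t ≤ m) :
    PR (fun i => C (s + i)) t := by
  refine ⟨fun i hi => h.1 _ (by omega), fun i hi => ?_, fun i j hij hj => ?_⟩
  · have := h.2.1 (s+i) (by omega)
    simpa [Nat.add_assoc] using this
  · have := h.2.2 (s+i) (s+j) (by omega) (by omega)
    simpa using this

lemma PR.reverse {C : ℕ → Finset ℕ} {m} (h : PR C m) :
    PR (fun i => C (m - 1 - i)) m := by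
  refine ⟨fun i hi => h.1 _ (by omega), fun i hi => ?_, fun i j hij hj => ?_⟩
  · show Overlaps (C (m - 1 - i)) (C (m - 1 - (i+1)))
    have he : m - 1 - i = (m - 1 - (i+1)) + 1 := by omega
    rw [he]
    exact ov_symm (h.2.1 (m - 1 - (i+1)) (by omega))
  · intro hov
    exact h.2.2 (m - 1 - j) (m - 1 - i) (by omega) (by omega) (ov_symm hov)

lemma biUnion_shift {C : ℕ → Finset ℕ} (s t : ℕ) :
    (Finset.range t).biUnion (fun i => C (s + i)) = (Finset.Ico s (s+t)).biUnion C := by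
  ext x
  simp only [Finset.mem_biUnion, Finset.mem_range, Finset.mem_Ico]
  constructor
  · rintro ⟨i, hi, hx⟩; exact ⟨s+i, by omega, hx⟩
  · rintro ⟨k, hk, hx⟩
    refine ⟨k - s, by omega, ?_⟩
    have he : s + (k - s) = k := by omega
    rw [he]; exact hx

lemma biUnion_rev {C : ℕ → Finset ℕ} (m t : ℕ) (ht : t ≤ m) :
    (Finset.range t).biUnion (fun i => C (m - 1 - i)) = (Finset.Ico (m - t) m).biUnion C := by
  ext x
  simp only [Finset.mem_biUnion, Finset.mem_range, Finset.mem_Ico]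
  constructor
  · rintro ⟨i, hi, hx⟩; exact ⟨m - 1 - i, by omega, hx⟩
  · rintro ⟨k, hk, hx⟩
    refine ⟨m - 1 - k, by omega, ?_⟩
    have he : m - 1 - (m - 1 - k) = k := by omega
    rw [he]; exact hx

/-- Two overlapping sets have at least 3 elements in their union. -/
lemma ov_card3 {A B : Finset ℕ} (h : Overlaps A B) : 3 ≤ (A ∪ B).card := by
  obtain ⟨z, hz⟩ := h.1
  obtain ⟨a, ha, ha'⟩ := Finset.not_subset.1 h.2.1
  obtain ⟨b, hb, hb'⟩ := Finset.not_subset.1 h.2.2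
  rw [Finset.mem_inter] at hz
  have hss : {z, a, b} ⊆ A ∪ B := by
    intro x hx
    simp only [Finset.mem_insert, Finset.mem_singleton] at hx
    rcases hx with rfl | rfl | rfl
    · exact Finset.mem_union_left _ hz.1
    · exact Finset.mem_union_left _ ha
    · exact Finset.mem_union_right _ hb
  have hcard : ({z, a, b} : Finset ℕ).card = 3 := by
    rw [Finset.card_insert_of_notMem, Finset.card_insert_of_notMem, Finset.card_singleton]
    · simp only [Finset.mem_singleton]; intro h'; subst h'; exact hb' ha
    · simp only [Finset.mem_insert, Finset.mem_singleton]
      rintro (rfl | rfl)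
      · exact ha' hz.2
      · exact hb' hz.1
  calc 3 = ({z, a, b} : Finset ℕ).card := hcard.symm
    _ ≤ (A ∪ B).card := Finset.card_le_card hss

lemma ov_card2 {A B : Finset ℕ} (h : Overlaps A B) : 2 ≤ A.card := by
  obtain ⟨z, hz⟩ := h.1
  obtain ⟨a, ha, ha'⟩ := Finset.not_subset.1 h.2.1
  rw [Finset.mem_inter] at hz
  have : ({z, a} : Finset ℕ) ⊆ A := by
    intro x hx
    simp only [Finset.mem_insert, Finset.mem_singleton] at hx
    rcases hx with rfl | rfl
    · exact hz.1
    · exact ha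
  calc 2 = ({z, a} : Finset ℕ).card := by
        rw [Finset.card_insert_of_notMem, Finset.card_singleton]
        simp only [Finset.mem_singleton]; rintro rfl; exact ha' hz.2
    _ ≤ A.card := Finset.card_le_card this

/-- In a path rep of length ≥ 4, sets at distance ≥ 2 are distinct. -/
lemma ne_far {C : ℕ → Finset ℕ} {m : ℕ} (hC : PR C m) (hm : 4 ≤ m) {p q : ℕ}
    (hpq : p + 2 ≤ q) (hq : q < m) : C p ≠ C q := by
  intro heq
  by_cases h1 : q + 1 < m
  · have hov := hC.2.1 q h1
    rw [← heq] at hov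
    exact hC.2.2 p (q+1) (by omega) h1 hov
  · by_cases h2 : p + 3 ≤ q
    · have hov := hC.2.1 (q-1) (by omega)
      have he : q - 1 + 1 = q := by omega
      rw [he, ← heq] at hov
      exact hC.2.2 p (q-1) (by omega) (by omega) (ov_symm hov)
    · -- q = p + 2 = m - 1, so p ≥ 1
      have hov := hC.2.1 (p-1) (by omega)
      have he : p - 1 + 1 = p := by omega
      rw [he, heq] at hov
      exact hC.2.2 (p-1) q (by omega) hq hov

/-- Propagation: a containment `C p ⊆ C q` (p at distance ≥ 2 below q) spreads to all
indices below q - 1. -/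
lemma prop_right {C : ℕ → Finset ℕ} {m : ℕ} (hC : PR C m) {p q : ℕ}
    (hpq : p + 2 ≤ q) (hq : q < m) (hsub : C p ⊆ C q) :
    ∀ k, k + 2 ≤ q → C k ⊆ C q := by
  have up : ∀ d, p + d + 2 ≤ q → C (p + d) ⊆ C q := by
    intro d
    induction d with
    | zero => intro _; exact hsub
    | succ n ih =>
      intro hd
      have h1 : C (p + n) ⊆ C q := ih (by omega)
      have hov := hC.2.1 (p + n) (by omega)
      obtain ⟨z, hz⟩ := hov.1
      rw [Finset.mem_inter] at hz
      have hne : (C (p + n + 1) ∩ C q).Nonempty :=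
        ⟨z, Finset.mem_inter.2 ⟨hz.2, h1 hz.1⟩⟩
      rcases not_ov_cases (hC.2.2 (p + n + 1) q (by omega) hq) hne with h | h
      · have he : p + (n + 1) = p + n + 1 := by omega
        rw [he]; exact h
      · exact absurd (h1.trans h) hov.2.1
  have down : ∀ d, d ≤ p → C (p - d) ⊆ C q := by
    intro d
    induction d with
    | zero => intro _; exact hsub
    | succ n ih =>
      intro hd
      have h1 : C (p - n) ⊆ C q := ih (by omega)
      have hov := hC.2.1 (p - (n+1)) (by omega)
      have he : p - (n+1) + 1 = p - n := by omega
      rw [he] at hov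
      obtain ⟨z, hz⟩ := hov.1
      rw [Finset.mem_inter] at hz
      have hne : (C (p - (n+1)) ∩ C q).Nonempty :=
        ⟨z, Finset.mem_inter.2 ⟨hz.1, h1 hz.2⟩⟩
      rcases not_ov_cases (hC.2.2 (p - (n+1)) q (by omega) hq) hne with h | h
      · exact h
      · exact absurd (h1.trans h) hov.2.2
  intro k hk
  by_cases hkp : p ≤ k
  · have := up (k - p) (by omega)
    have he : p + (k - p) = k := by omega
    rwa [he] at this
  · have := down (p - k) (by omega)
    have he : p - (p - k) = k := by omega
    rwa [he] at this

/-- Propagation, mirror: a containment `C q ⊆ C p` (q at distance ≥ 2 above p) spreads to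
all indices above p + 1. -/
lemma prop_left {C : ℕ → Finset ℕ} {m : ℕ} (hC : PR C m) {p q : ℕ}
    (hpq : p + 2 ≤ q) (hq : q < m) (hsub : C q ⊆ C p) :
    ∀ k, p + 2 ≤ k → k < m → C k ⊆ C p := by
  have up : ∀ d, q + d < m → C (q + d) ⊆ C p := by
    intro d
    induction d with
    | zero => intro _; exact hsub
    | succ n ih =>
      intro hd
      have h1 : C (q + n) ⊆ C p := ih (by omega)
      have hov := hC.2.1 (q + n) (by omega)
      obtain ⟨z, hz⟩ := hov.1
      rw [Finset.mem_inter] at hz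
      have hne : (C p ∩ C (q + n + 1)).Nonempty :=
        ⟨z, Finset.mem_inter.2 ⟨h1 hz.1, hz.2⟩⟩
      rcases not_ov_cases (hC.2.2 p (q + n + 1) (by omega) (by omega)) hne with h | h
      · exact absurd (h1.trans h) hov.2.1
      · have he : q + (n + 1) = q + n + 1 := by omega
        rw [he]; exact h
  have down : ∀ d, p + 2 ≤ q - d → C (q - d) ⊆ C p := by
    intro d
    induction d with
    | zero => intro _; exact hsub
    | succ n ih =>
      intro hd
      have h1 : C (q - n) ⊆ C p := ih (by omega)
      have hov := hC.2.1 (q - (n+1)) (by omega)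
      have he : q - (n+1) + 1 = q - n := by omega
      rw [he] at hov
      obtain ⟨z, hz⟩ := hov.1
      rw [Finset.mem_inter] at hz
      have hne : (C p ∩ C (q - (n+1))).Nonempty :=
        ⟨z, Finset.mem_inter.2 ⟨h1 hz.2, hz.1⟩⟩
      rcases not_ov_cases (hC.2.2 p (q - (n+1)) (by omega) (by omega)) hne with h | h
      · exact absurd (h1.trans h) hov.2.2
      · exact h
  intro k hk hkm
  by_cases hkq : q ≤ k
  · have := up (k - q) (by omega)
    have he : q + (k - q) = k := by omega
    rwa [he] at this
  · have := down (q - k) (by omega)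
    have he : q - (q - k) = k := by omega
    rwa [he] at this

lemma card_lt_of_not_subset {C : ℕ → Finset ℕ} {m : ℕ} (hm : 1 ≤ m)
    (h : ¬ C (m-1) ⊆ UU C (m-1)) : (UU C (m-1)).card < (UU C m).card := by
  obtain ⟨x, hx1, hx2⟩ := Finset.not_subset.1 h
  apply Finset.card_lt_card
  constructor
  · exact UU_mono (by omega)
  · intro hsub
    exact hx2 (hsub (subset_UU (by omega) hx1))

lemma UU_two {C : ℕ → Finset ℕ} : UU C 2 = C 0 ∪ C 1 := by
  have h2 : (2:ℕ) = 1 + 1 := rfl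
  have h1 : (1:ℕ) = 0 + 1 := rfl
  rw [h2, UU_succ, h1, UU_succ]
  simp [UU]

/-- Clause B: in a tight path rep, the last set is contained in the union of the others. -/
lemma clauseB : ∀ (m : ℕ) (C : ℕ → Finset ℕ),
    (∀ ℓ (C' : ℕ → Finset ℕ), ℓ < m → PR C' ℓ → ℓ ≤ (UU C' ℓ).card) →
    PR C m → 2 ≤ m → (UU C m).card = m → C (m-1) ⊆ UU C (m-1) := by
  intro m
  induction m using Nat.strong_induction_on with
  | _ m IH =>
    intro C Arec hC hm2 htight
    by_contra hns
    have hlt := card_lt_of_not_subset (by omega) hns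
    rw [htight] at hlt
    -- small cases
    rcases Nat.lt_or_ge m 4 with hm4 | hm4
    · interval_cases m
      · -- m = 2
        have h3 : 3 ≤ (UU C 2).card := by
          rw [UU_two]; exact ov_card3 (hC.2.1 0 (by omega))
        omega
      · -- m = 3 : UU C 2 has card ≤ 2 but contains C 0 ∪ C 1
        have h3 : 3 ≤ (UU C 2).card := by
          rw [UU_two]; exact ov_card3 (hC.2.1 0 (by omega))
        have he : (3:ℕ) - 1 = 2 := rfl
        rw [he] at hlt
        omega
    · -- m ≥ 4
      have hpre : (UU C (m-1)).card = m - 1 := by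
        have := Arec (m-1) C (by omega) (hC.mono (by omega))
        omega
      have hB : C (m-2) ⊆ UU C (m-2) := by
        have := IH (m-1) (by omega) C
          (fun ℓ C' hℓ h => Arec ℓ C' (by omega) h)
          (hC.mono (by omega)) (by omega) hpre
        have he : m - 1 - 1 = m - 2 := by omega
        rwa [he] at this
      obtain ⟨ν, hν1, hν2⟩ := Finset.not_subset.1 hns
      have hov : Overlaps (C (m-2)) (C (m-1)) := by
        have := hC.2.1 (m-2) (by omega)
        have he : m - 2 + 1 = m - 1 := by omega
        rwa [he] at this
      obtain ⟨z, hz⟩ := hov.1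
      rw [Finset.mem_inter] at hz
      obtain ⟨j, hj, hzj⟩ := mem_UU.1 (hB hz.1)
      have hne : (C j ∩ C (m-1)).Nonempty := ⟨z, Finset.mem_inter.2 ⟨hzj, hz.2⟩⟩
      rcases not_ov_cases (hC.2.2 j (m-1) (by omega) (by omega)) hne with h | h
      · have hall := prop_right hC (p := j) (q := m-1) (by omega) (by omega) h
        have hsub2 : UU C (m-2) ⊆ C (m-1) := by
          intro y hy
          obtain ⟨k, hk, hky⟩ := mem_UU.1 hy
          exact hall k (by omega) hky
        exact hov.2.1 (hB.trans hsub2)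
      · exact hν2 (subset_UU (by omega) (h hν1))

/-- Chain bound, left version: the union of `C 0, ..., C (e-1)` has at least `e+1`
elements, provided `C e` is contained in no earlier far set. -/
lemma CBleft {m : ℕ} {C : ℕ → Finset ℕ}
    (Arec : ∀ ℓ (C' : ℕ → Finset ℕ), ℓ < m → PR C' ℓ → ℓ ≤ (UU C' ℓ).card)
    (hC : PR C m) {e : ℕ} (he1 : 1 ≤ e) (hem : e < m)
    (hns : ∀ i, i + 2 ≤ e → ¬ C e ⊆ C i) : e + 1 ≤ (UU C e).card := by
  rcases Nat.lt_or_ge e 2 with he2 | he2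
  · -- e = 1
    have he : e = 1 := by omega
    subst he
    have : UU C 1 = C 0 := by simp [UU]
    rw [this]
    exact ov_card2 (hC.2.1 0 (by omega))
  · by_contra hcard
    push_neg at hcard
    have heq : (UU C e).card = e := by
      have := Arec e C hem (hC.mono (by omega))
      omega
    have hB := clauseB e C (fun ℓ C' hℓ h => Arec ℓ C' (by omega) h)
      (hC.mono (by omega)) (by omega) heq
    have dich : ∀ i, i + 2 ≤ e → (C i ⊆ C e ∨ C i ∩ C e = ∅) := by
      intro i hi
      by_cases hie : (C i ∩ C e).Nonempty
      · rcases not_ov_cases (hC.2.2 i e hi hem) hie with h | h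
        · exact Or.inl h
        · exact absurd h (hns i hi)
      · exact Or.inr (Finset.not_nonempty_iff_eq_empty.1 hie)
    have hovcons : ∀ i, i + 1 < m → (C i ∩ C (i+1)).Nonempty := fun i hi => (hC.2.1 i hi).1
    have unifup : ∀ i, i + 3 ≤ e → C i ⊆ C e → C (i+1) ⊆ C e := by
      intro i hi hsub
      obtain ⟨z, hz⟩ := hovcons i (by omega)
      rw [Finset.mem_inter] at hz
      rcases dich (i+1) (by omega) with h | h
      · exact h
      · exact absurd (Finset.mem_inter.2 ⟨hz.2, hsub hz.1⟩) (by rw [h]; exact Finset.notMem_empty z)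
    have unifdown : ∀ i, i + 3 ≤ e → C (i+1) ⊆ C e → C i ⊆ C e := by
      intro i hi hsub
      obtain ⟨z, hz⟩ := hovcons i (by omega)
      rw [Finset.mem_inter] at hz
      rcases dich i (by omega) with h | h
      · exact h
      · exact absurd (Finset.mem_inter.2 ⟨hz.1, hsub hz.2⟩) (by rw [h]; exact Finset.notMem_empty z)
    rcases dich 0 (by omega) with h0 | h0
    · -- all prefix sets inside C e : contradiction with overlap of C (e-1), C e
      have hall : ∀ i, i + 2 ≤ e → C i ⊆ C e := by
        intro i
        induction i with
        | zero => intro _; exact h0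
        | succ n ih => intro hi; exact unifup n (by omega) (ih (by omega))
      have hovlast : Overlaps (C (e-1)) (C e) := by
        have := hC.2.1 (e-1) (by omega)
        have he' : e - 1 + 1 = e := by omega
        rwa [he'] at this
      apply hovlast.2.1
      intro y hy
      obtain ⟨k, hk, hky⟩ := mem_UU.1 (hB hy)
      exact hall k (by omega) hky
    · -- all prefix sets disjoint from C e : contradiction with overlap of C (e-1), C e
      have hall : ∀ i, i + 2 ≤ e → C i ∩ C e = ∅ := by
        intro i
        induction i with
        | zero => intro _; exact h0
        | succ n ih =>
          intro hi
          rcases dich (n+1) hi with h | h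
          · have hn : C n ⊆ C e := unifdown n (by omega) h
            obtain ⟨z, hz⟩ := hovcons n (by omega)
            rw [Finset.mem_inter] at hz
            exact absurd (Finset.mem_inter.2 ⟨hz.1, hn hz.1⟩)
              (by rw [ih (by omega)]; exact Finset.notMem_empty z)
          · exact h
      have hovlast : Overlaps (C (e-1)) (C e) := by
        have := hC.2.1 (e-1) (by omega)
        have he' : e - 1 + 1 = e := by omega
        rwa [he'] at this
      obtain ⟨z, hz⟩ := hovlast.1
      rw [Finset.mem_inter] at hz
      obtain ⟨j, hj, hzj⟩ := mem_UU.1 (hB hz.1)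
      exact absurd (Finset.mem_inter.2 ⟨hzj, hz.2⟩)
        (by rw [hall j (by omega)]; exact Finset.notMem_empty z)

/-- Chain bound, right version. -/
lemma CBright {m : ℕ} {C : ℕ → Finset ℕ}
    (Arec : ∀ ℓ (C' : ℕ → Finset ℕ), ℓ < m → PR C' ℓ → ℓ ≤ (UU C' ℓ).card)
    (hC : PR C m) {s : ℕ} (hs : s + 2 ≤ m)
    (hns : ∀ k, s + 2 ≤ k → k < m → ¬ C s ⊆ C k) :
    m - s ≤ ((Finset.Ico (s+1) m).biUnion C).card := by
  have hD := hC.reverse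
  have hcb := CBleft Arec hD (e := m - 1 - s) (by omega) (by omega) ?_
  · have hUeq : UU (fun i => C (m - 1 - i)) (m - 1 - s) = (Finset.Ico (s+1) m).biUnion C := by
      have := biUnion_rev (C := C) m (m - 1 - s) (by omega)
      have he : m - (m - 1 - s) = s + 1 := by omega
      rw [he] at this
      exact this
    rw [hUeq] at hcb
    omega
  · intro i hi
    show ¬ C (m - 1 - (m - 1 - s)) ⊆ C (m - 1 - i)
    have he : m - 1 - (m - 1 - s) = s := by omega
    rw [he]
    exact hns (m - 1 - i) (by omega) (by omega)

/-- No-sharing: two cross-laminar chains with anchored ends are elementwise disjoint. -/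
lemma NS (H T : ℕ → Finset ℕ) (α β : ℕ)
    (hH : ∀ i, i + 1 < α → (H i ∩ H (i+1)).Nonempty)
    (hT : ∀ j, j + 1 < β → (T j ∩ T (j+1)).Nonempty)
    (cross : ∀ i j, i < α → j < β → ¬ Overlaps (H i) (T j))
    (h1 : ∀ j, j < β → ¬ H (α - 1) ⊆ T j)
    (h2 : ∀ i, i < α → ¬ T 0 ⊆ H i) :
    ∀ i j, i < α → j < β → H i ∩ T j = ∅ := by
  by_contra hcon
  push_neg at hcon
  obtain ⟨i0, j0, hi0, hj0, hne0⟩ := hcon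
  classical
  let Pred : ℕ → Prop := fun i => ∃ j, j < β ∧ (H i ∩ T j).Nonempty
  have hPred : DecidablePred Pred := fun _ => Classical.dec _
  obtain ⟨M, hMα, hMpred, hMmax⟩ :
      ∃ M, M < α ∧ Pred M ∧ ∀ i, i < α → Pred i → i ≤ M := by
    obtain ⟨M, hM1, hM2⟩ := Finset.exists_max_image
      ((Finset.range α).filter (fun i => Pred i)) id
      ⟨i0, by simp only [Finset.mem_filter, Finset.mem_range]
              exact ⟨hi0, j0, hj0, hne0⟩⟩
    simp only [Finset.mem_filter, Finset.mem_range] at hM1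
    refine ⟨M, hM1.1, hM1.2, fun i hi hp => ?_⟩
    exact hM2 i (by simp only [Finset.mem_filter, Finset.mem_range]; exact ⟨hi, hp⟩)
  obtain ⟨jw, hjw, hnew⟩ := hMpred
  obtain ⟨mj, hmjβ, hnemj, hmjmin⟩ :
      ∃ mj, mj < β ∧ (H M ∩ T mj).Nonempty ∧
        ∀ j, j < β → (H M ∩ T j).Nonempty → mj ≤ j := by
    obtain ⟨mj, hm1, hm2⟩ := Finset.exists_min_image
      ((Finset.range β).filter (fun j => (H M ∩ T j).Nonempty)) id
      ⟨jw, by simp only [Finset.mem_filter, Finset.mem_range]; exact ⟨hjw, hnew⟩⟩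
    simp only [Finset.mem_filter, Finset.mem_range] at hm1
    refine ⟨mj, hm1.1, hm1.2, fun j hj hp => ?_⟩
    exact hm2 j (by simp only [Finset.mem_filter, Finset.mem_range]; exact ⟨hj, hp⟩)
  rcases not_ov_cases (cross M mj hMα hmjβ) hnemj with hsub | hsub
  · by_cases hM1 : M + 1 < α
    · obtain ⟨z, hz⟩ := hH M hM1
      rw [Finset.mem_inter] at hz
      have hle := hMmax (M+1) hM1 ⟨mj, hmjβ, ⟨z, Finset.mem_inter.2 ⟨hz.2, hsub hz.1⟩⟩⟩
      omega
    · have heM : α - 1 = M := by omega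
      exact h1 mj hmjβ (by rw [heM]; exact hsub)
  · by_cases hmj0 : mj = 0
    · exact h2 M hMα (by rw [← hmj0]; exact hsub)
    · obtain ⟨z, hz⟩ := hT (mj - 1) (by omega)
      have he : mj - 1 + 1 = mj := by omega
      rw [he] at hz
      rw [Finset.mem_inter] at hz
      have hle := hmjmin (mj - 1) (by omega) ⟨z, Finset.mem_inter.2 ⟨hsub hz.2, hz.1⟩⟩
      omega

lemma subset_empty_contra {A B : Finset ℕ} (hsub : A ⊆ B) (hemp : A ∩ B = ∅)
    (hne : A.Nonempty) : False := by
  obtain ⟨x, hx⟩ := hne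
  have hmem : x ∈ A ∩ B := Finset.mem_inter.2 ⟨hx, hsub hx⟩
  rw [hemp] at hmem
  exact Finset.notMem_empty x hmem

lemma mem_empty_contra {A B : Finset ℕ} {x : ℕ} (hx1 : x ∈ A) (hx2 : x ∈ B)
    (hemp : A ∩ B = ∅) : False := by
  have hmem : x ∈ A ∩ B := Finset.mem_inter.2 ⟨hx1, hx2⟩
  rw [hemp] at hmem
  exact Finset.notMem_empty x hmem

lemma ov_cons {C : ℕ → Finset ℕ} {m : ℕ} (hC : PR C m) {i j : ℕ} (hij : j = i + 1)
    (hj : j < m) : Overlaps (C i) (C j) := by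
  subst hij; exact hC.2.1 i hj

lemma Ico_biUnion_subset_UU {C : ℕ → Finset ℕ} {s m : ℕ} :
    (Finset.Ico s m).biUnion C ⊆ UU C m := by
  apply Finset.biUnion_subset_biUnion_of_subset_left
  intro x hx
  rw [Finset.mem_Ico] at hx
  rw [Finset.mem_range]
  exact hx.2

/-- The master window lemma. -/
lemma master {m : ℕ} {C : ℕ → Finset ℕ}
    (Arec : ∀ ℓ (C' : ℕ → Finset ℕ), ℓ < m → PR C' ℓ → ℓ ≤ (UU C' ℓ).card)
    (hC : PR C m) (hm4 : 4 ≤ m) :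
    ∀ w a b, b + 2 = a + w → 1 ≤ a → a ≤ b + 1 → b + 2 ≤ m →
      (2 ≤ a ∨ b + 3 ≤ m) →
      (∀ k, k + 2 ≤ a → C k ⊆ C a) →
      (∀ k, b + 2 ≤ k → k < m → C k ⊆ C b) →
      m ≤ (UU C m).card := by
  intro w
  induction w using Nat.strong_induction_on with
  | _ w IHw =>
  intro a b hw ha1 hab hbm hht hcap1 hcap2
  rcases Nat.lt_or_ge w 3 with hw3 | hw3
  · rcases Nat.lt_or_ge w 2 with hw2 | hw2
    · -- ATOM : w = 1, b + 1 = a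
      have hba : b + 1 = a := by omega
      by_cases ha1' : a = 1
      · -- head empty, single right chain bound
        have hb0 : b = 0 := by omega
        have hside : ∀ k, 0 + 2 ≤ k → k < m → ¬ C 0 ⊆ C k := by
          intro k hk hkm hsub
          refine ne_far hC hm4 (p := 0) (q := k) hk hkm ?_
          refine Finset.Subset.antisymm hsub ?_
          have h2 := hcap2 k (by omega) hkm
          rwa [hb0] at h2
        have hcb := CBright Arec hC (s := 0) (by omega) hside
        calc m = m - 0 := by omega
          _ ≤ ((Finset.Ico 1 m).biUnion C).card := hcb
          _ ≤ (UU C m).card := Finset.card_le_card Ico_biUnion_subset_UU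
      · by_cases ham : a = m - 1
        · -- tail empty, single left chain bound
          have hside : ∀ i, i + 2 ≤ m - 1 → ¬ C (m-1) ⊆ C i := by
            intro i hi hsub
            refine ne_far hC hm4 (p := i) (q := m - 1) hi (by omega) ?_
            refine Finset.Subset.antisymm ?_ hsub
            have h2 := hcap1 i (by omega)
            rwa [ham] at h2
          have hcb := CBleft Arec hC (e := m - 1) (by omega) (by omega) hside
          calc m = (m - 1) + 1 := by omega
            _ ≤ (UU C (m-1)).card := hcb
            _ ≤ (UU C m).card := Finset.card_le_card (UU_mono (by omega))
        · -- middle atom: both chain bounds + no-sharing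
          have ha2 : 2 ≤ a := by omega
          have ham2 : a + 2 ≤ m := by omega
          have hbeq : b = a - 1 := by omega
          have hsL : ∀ i, i + 2 ≤ a - 1 → ¬ C (a-1) ⊆ C i := by
            intro i hi hsub
            have hov := ov_cons hC (i := a - 1) (j := a) (by omega) (by omega)
            exact hov.2.1 (hsub.trans (hcap1 i (by omega)))
          have hcbL := CBleft Arec hC (e := a - 1) (by omega) (by omega) hsL
          have hsR : ∀ k, a + 2 ≤ k → k < m → ¬ C a ⊆ C k := by
            intro k hk hkm hsub
            have hov := ov_cons hC (i := a - 1) (j := a) (by omega) (by omega)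
            have hkb : C k ⊆ C (a-1) := by
              have h2 := hcap2 k (by omega) hkm
              rwa [hbeq] at h2
            exact hov.2.2 (hsub.trans hkb)
          have hcbR := CBright Arec hC (s := a) (by omega) hsR
          have hcons2 : ∀ j, j + 1 < m - a - 1 →
              (C (a+1+j) ∩ C (a+1+(j+1))).Nonempty := by
            intro j hj
            have h2 := (hC.2.1 (a+1+j) (by omega)).1
            have he : a + 1 + j + 1 = a + 1 + (j + 1) := by omega
            rwa [he] at h2
          have hn1 : ∀ j, j < m - a - 1 → ¬ C (a - 1 - 1) ⊆ C (a + 1 + j) := by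
            intro j hj hsub
            have hov := ov_cons hC (i := a - 1 - 1) (j := a - 1) (by omega) (by omega)
            refine hov.2.1 (hsub.trans ?_)
            have h2 := hcap2 (a+1+j) (by omega) (by omega)
            rwa [hbeq] at h2
          have hn2 : ∀ i, i < a - 1 → ¬ C (a + 1 + 0) ⊆ C i := by
            intro i hi hsub
            have hov := ov_cons hC (i := a) (j := a + 1) (by omega) (by omega)
            rw [(show a + 1 + 0 = a + 1 by omega)] at hsub
            exact hov.2.2 (hsub.trans (hcap1 i (by omega)))
          have hNS := NS C (fun j => C (a + 1 + j)) (a - 1) (m - a - 1)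
            (fun i hi => (hC.2.1 i (by omega)).1) hcons2
            (fun i j hi hj => hC.2.2 i (a + 1 + j) (by omega) (by omega))
            (fun j hj => hn1 j hj) (fun i hi => hn2 i hi)
          have hdisj : Disjoint (UU C (a - 1)) ((Finset.Ico (a+1) m).biUnion C) := by
            rw [Finset.disjoint_left]
            intro x hx1 hx2
            obtain ⟨i, hi, hxi⟩ := mem_UU.1 hx1
            rw [Finset.mem_biUnion] at hx2
            obtain ⟨k, hk, hxk⟩ := hx2
            rw [Finset.mem_Ico] at hk
            have hres : C i ∩ C (a + 1 + (k - a - 1)) = ∅ := hNS i (k - a - 1) hi (by omega)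
            rw [(show a + 1 + (k - a - 1) = k by omega)] at hres
            exact mem_empty_contra hxi hxk hres
          calc m = ((a-1) + 1) + (m - a) := by omega
            _ ≤ (UU C (a-1)).card + ((Finset.Ico (a+1) m).biUnion C).card :=
                Nat.add_le_add hcbL hcbR
            _ = ((UU C (a-1)) ∪ ((Finset.Ico (a+1) m).biUnion C)).card :=
                (Finset.card_union_of_disjoint hdisj).symm
            _ ≤ (UU C m).card := by
                apply Finset.card_le_card
                exact Finset.union_subset (UU_mono (by omega)) Ico_biUnion_subset_UU
    · -- TRIPLE : w = 2, b = a
      have hba : b = a := by omega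
      subst hba
      by_cases hXY : (C (b - 1) ∩ C (b + 1)).Nonempty
      · rcases not_ov_cases (hC.2.2 (b-1) (b+1) (by omega) (by omega)) hXY with hsub | hsub
        · have hprop := prop_right hC (p := b - 1) (q := b + 1) (by omega) (by omega) hsub
          exact IHw 1 (by omega) (b+1) b (by omega) (by omega) (by omega) hbm
            (Or.inl (by omega)) (fun k hk => hprop k hk) hcap2
        · have hprop := prop_left hC (p := b - 1) (q := b + 1) (by omega) (by omega) hsub
          exact IHw 1 (by omega) b (b-1) (by omega) ha1 (by omega) (by omega)
            (Or.inr (by omega)) hcap1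
            (fun k hk hkm => hprop k (by omega) hkm)
      · have hXY' : C (b - 1) ∩ C (b + 1) = ∅ := Finset.not_nonempty_iff_eq_empty.1 hXY
        have hsL : ∀ i, i + 2 ≤ b → ¬ C b ⊆ C i := by
          intro i hi hsub
          exact ne_far hC hm4 (p := i) (q := b) hi (by omega)
            (Finset.Subset.antisymm (hcap1 i hi) hsub)
        have hcbL := CBleft Arec hC (e := b) (by omega) (by omega) hsL
        have hsR : ∀ k, b + 2 ≤ k → k < m → ¬ C b ⊆ C k := by
          intro k hk hkm hsub
          exact ne_far hC hm4 (p := b) (q := k) hk hkm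
            (Finset.Subset.antisymm hsub (hcap2 k hk hkm))
        have hcbR := CBright Arec hC (s := b) (by omega) hsR
        have hcons2 : ∀ j, j + 1 < m - b - 1 →
            (C (b+1+j) ∩ C (b+1+(j+1))).Nonempty := by
          intro j hj
          have h2 := (hC.2.1 (b+1+j) (by omega)).1
          have he : b + 1 + j + 1 = b + 1 + (j + 1) := by omega
          rwa [he] at h2
        have hn1 : ∀ j, j < m - b - 1 → ¬ C (b - 1) ⊆ C (b + 1 + j) := by
          intro j hj hsub
          rcases Nat.eq_zero_or_pos j with rfl | hjpos
          · rw [(show b + 1 + 0 = b + 1 by omega)] at hsub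
            exact subset_empty_contra hsub hXY' (hC.1 (b-1) (by omega))
          · have htl : C (b + 1 + j) ⊆ C b := hcap2 (b + 1 + j) (by omega) (by omega)
            have hov := ov_cons hC (i := b - 1) (j := b) (by omega) (by omega)
            exact hov.2.1 (hsub.trans htl)
        have hn2 : ∀ i, i < b → ¬ C (b + 1 + 0) ⊆ C i := by
          intro i hi hsub
          rw [(show b + 1 + 0 = b + 1 by omega)] at hsub
          rcases Nat.lt_or_ge i (b-1) with hib | hib
          · have hov := ov_cons hC (i := b) (j := b + 1) (by omega) (by omega)
            exact hov.2.2 (hsub.trans (hcap1 i (by omega)))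
          · have hieq : i = b - 1 := by omega
            subst hieq
            refine hXY ?_
            obtain ⟨x, hx⟩ := hC.1 (b+1) (by omega)
            exact ⟨x, Finset.mem_inter.2 ⟨hsub hx, hx⟩⟩
        have hNS := NS C (fun j => C (b + 1 + j)) b (m - b - 1)
          (fun i hi => (hC.2.1 i (by omega)).1) hcons2
          (fun i j hi hj => hC.2.2 i (b + 1 + j) (by omega) (by omega))
          (fun j hj => hn1 j hj) (fun i hi => hn2 i hi)
        have hdisj : Disjoint (UU C b) ((Finset.Ico (b+1) m).biUnion C) := by
          rw [Finset.disjoint_left]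
          intro x hx1 hx2
          obtain ⟨i, hi, hxi⟩ := mem_UU.1 hx1
          rw [Finset.mem_biUnion] at hx2
          obtain ⟨k, hk, hxk⟩ := hx2
          rw [Finset.mem_Ico] at hk
          have hres : C i ∩ C (b + 1 + (k - b - 1)) = ∅ := hNS i (k - b - 1) hi (by omega)
          rw [(show b + 1 + (k - b - 1) = k by omega)] at hres
          exact mem_empty_contra hxi hxk hres
        calc m ≤ (b + 1) + (m - b) := by omega
          _ ≤ (UU C b).card + ((Finset.Ico (b+1) m).biUnion C).card :=
              Nat.add_le_add hcbL hcbR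
          _ = ((UU C b) ∪ ((Finset.Ico (b+1) m).biUnion C)).card :=
              (Finset.card_union_of_disjoint hdisj).symm
          _ ≤ (UU C m).card := by
              apply Finset.card_le_card
              exact Finset.union_subset (UU_mono (by omega)) Ico_biUnion_subset_UU
  · -- GENERAL : w ≥ 3, b ≥ a + 1
    have hba : a + 1 ≤ b := by omega
    by_cases hAD : ∃ i j, a ≤ i + 1 ∧ i + 2 ≤ j ∧ j ≤ b + 1 ∧ (C i ∩ C j).Nonempty
    · obtain ⟨i, j, hai, hij, hjb, hne⟩ := hAD
      rcases not_ov_cases (hC.2.2 i j hij (by omega)) hne with hsub | hsub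
      · have hprop := prop_right hC (p := i) (q := j) hij (by omega) hsub
        exact IHw (b + 2 - j) (by omega) j b (by omega) (by omega) (by omega) hbm
          (Or.inl (by omega)) (fun k hk => hprop k hk) hcap2
      · have hprop := prop_left hC (p := i) (q := j) hij (by omega) hsub
        exact IHw (i + 2 - a) (by omega) a i (by omega) ha1 (by omega) (by omega)
          (Or.inr (by omega)) hcap1 (fun k hk hkm => hprop k hk hkm)
    · push_neg at hAD
      have hAD' : ∀ i j, a ≤ i + 1 → i + 2 ≤ j → j ≤ b + 1 → C i ∩ C j = ∅ :=
        fun i j h1 h2 h3 => hAD i j h1 h2 h3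
      have hsL : ∀ i, i + 2 ≤ a → ¬ C a ⊆ C i := by
        intro i hi hsub
        exact ne_far hC hm4 (p := i) (q := a) hi (by omega)
          (Finset.Subset.antisymm (hcap1 i hi) hsub)
      have hcbL := CBleft Arec hC (e := a) (by omega) (by omega) hsL
      have hsR : ∀ k, b + 2 ≤ k → k < m → ¬ C b ⊆ C k := by
        intro k hk hkm hsub
        exact ne_far hC hm4 (p := b) (q := k) hk hkm
          (Finset.Subset.antisymm hsub (hcap2 k hk hkm))
      have hcbR := CBright Arec hC (s := b) (by omega) hsR
      have hmid : b - (a + 1) ≤ ((Finset.Ico (a+1) b).biUnion C).card := by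
        have hseg := hC.segment (a+1) (b - (a+1)) (by omega)
        have hbd := Arec (b - (a+1)) _ (by omega) hseg
        have hre := biUnion_shift (C := C) (a+1) (b - (a+1))
        rw [(show a + 1 + (b - (a+1)) = b by omega)] at hre
        rw [UU, hre] at hbd
        exact hbd
      have d12 : Disjoint (UU C a) ((Finset.Ico (a+1) b).biUnion C) := by
        rw [Finset.disjoint_left]
        intro x hx1 hx2
        obtain ⟨i, hi, hxi⟩ := mem_UU.1 hx1
        rw [Finset.mem_biUnion] at hx2
        obtain ⟨k, hk, hxk⟩ := hx2
        rw [Finset.mem_Ico] at hk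
        rcases Nat.lt_or_ge i (a-1) with hia | hia
        · have hsubia := hcap1 i (by omega)
          rcases Nat.lt_or_ge (a+1) k with hk2 | hk2
          · exact mem_empty_contra (hsubia hxi) hxk
              (hAD' a k (by omega) (by omega) (by omega))
          · have hkeq : k = a + 1 := by omega
            subst hkeq
            have hne2 : (C i ∩ C (a+1)).Nonempty := ⟨x, Finset.mem_inter.2 ⟨hxi, hxk⟩⟩
            rcases not_ov_cases (hC.2.2 i (a+1) (by omega) (by omega)) hne2 with hs | hs
            · have hprop := prop_right hC (p := i) (q := a+1) (by omega) (by omega) hs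
              exact subset_empty_contra (hprop (a-1) (by omega))
                (hAD' (a-1) (a+1) (by omega) (by omega) (by omega))
                (hC.1 (a-1) (by omega))
            · have hov := ov_cons hC (i := a) (j := a + 1) (by omega) (by omega)
              exact hov.2.2 (hs.trans hsubia)
        · have hieq : i = a - 1 := by omega
          subst hieq
          exact mem_empty_contra hxi hxk
            (hAD' (a-1) k (by omega) (by omega) (by omega))
      have d23 : Disjoint ((Finset.Ico (a+1) b).biUnion C)
          ((Finset.Ico (b+1) m).biUnion C) := by
        rw [Finset.disjoint_left]
        intro x hx1 hx2
        rw [Finset.mem_biUnion] at hx1 hx2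
        obtain ⟨k, hk, hxk⟩ := hx1
        obtain ⟨l, hl, hxl⟩ := hx2
        rw [Finset.mem_Ico] at hk hl
        rcases Nat.lt_or_ge (b+1) l with hl2 | hl2
        · have hsubl := hcap2 l (by omega) (by omega)
          rcases Nat.lt_or_ge k (b-1) with hk2 | hk2
          · exact mem_empty_contra hxk (hsubl hxl)
              (hAD' k b (by omega) (by omega) (by omega))
          · have hkeq : k = b - 1 := by omega
            subst hkeq
            have hne2 : (C (b-1) ∩ C l).Nonempty := ⟨x, Finset.mem_inter.2 ⟨hxk, hxl⟩⟩
            rcases not_ov_cases (hC.2.2 (b-1) l (by omega) (by omega)) hne2 with hs | hs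
            · have hov := ov_cons hC (i := b - 1) (j := b) (by omega) (by omega)
              exact hov.2.1 (hs.trans hsubl)
            · have hprop := prop_left hC (p := b-1) (q := l) (by omega) (by omega) hs
              refine subset_empty_contra (hprop (b+1) (by omega) (by omega)) ?_
                (hC.1 (b+1) (by omega))
              rw [Finset.inter_comm]
              exact hAD' (b-1) (b+1) (by omega) (by omega) (by omega)
        · have hleq : l = b + 1 := by omega
          subst hleq
          exact mem_empty_contra hxk hxl
            (hAD' k (b+1) (by omega) (by omega) (by omega))
      have hcons2 : ∀ j, j + 1 < m - b - 1 →
          (C (b+1+j) ∩ C (b+1+(j+1))).Nonempty := by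
        intro j hj
        have h2 := (hC.2.1 (b+1+j) (by omega)).1
        have he : b + 1 + j + 1 = b + 1 + (j + 1) := by omega
        rwa [he] at h2
      have hn1 : ∀ j, j < m - b - 1 → ¬ C (a - 1) ⊆ C (b + 1 + j) := by
        intro j hj hsub
        rcases Nat.eq_zero_or_pos j with rfl | hjpos
        · rw [(show b + 1 + 0 = b + 1 by omega)] at hsub
          exact subset_empty_contra hsub
            (hAD' (a-1) (b+1) (by omega) (by omega) (by omega))
            (hC.1 (a-1) (by omega))
        · have htl : C (b + 1 + j) ⊆ C b := hcap2 (b + 1 + j) (by omega) (by omega)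
          exact subset_empty_contra (hsub.trans htl)
            (hAD' (a-1) b (by omega) (by omega) (by omega))
            (hC.1 (a-1) (by omega))
      have hn2 : ∀ i, i < a → ¬ C (b + 1 + 0) ⊆ C i := by
        intro i hi hsub
        rw [(show b + 1 + 0 = b + 1 by omega)] at hsub
        rcases Nat.lt_or_ge i (a-1) with hia | hia
        · refine subset_empty_contra (hsub.trans (hcap1 i (by omega))) ?_
            (hC.1 (b+1) (by omega))
          rw [Finset.inter_comm]
          exact hAD' a (b+1) (by omega) (by omega) (by omega)
        · have hieq : i = a - 1 := by omega
          subst hieq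
          refine subset_empty_contra hsub ?_ (hC.1 (b+1) (by omega))
          rw [Finset.inter_comm]
          exact hAD' (a-1) (b+1) (by omega) (by omega) (by omega)
      have hNS := NS C (fun j => C (b + 1 + j)) a (m - b - 1)
        (fun i hi => (hC.2.1 i (by omega)).1) hcons2
        (fun i j hi hj => hC.2.2 i (b + 1 + j) (by omega) (by omega))
        (fun j hj => hn1 j hj) (fun i hi => hn2 i hi)
      have d13 : Disjoint (UU C a) ((Finset.Ico (b+1) m).biUnion C) := by
        rw [Finset.disjoint_left]
        intro x hx1 hx2
        obtain ⟨i, hi, hxi⟩ := mem_UU.1 hx1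
        rw [Finset.mem_biUnion] at hx2
        obtain ⟨l, hl, hxl⟩ := hx2
        rw [Finset.mem_Ico] at hl
        have hres : C i ∩ C (b + 1 + (l - b - 1)) = ∅ := hNS i (l - b - 1) hi (by omega)
        rw [(show b + 1 + (l - b - 1) = l by omega)] at hres
        exact mem_empty_contra hxi hxl hres
      have d1_23 : Disjoint (UU C a)
          (((Finset.Ico (a+1) b).biUnion C) ∪ ((Finset.Ico (b+1) m).biUnion C)) :=
        Finset.disjoint_union_right.2 ⟨d12, d13⟩
      calc m = (a + 1) + ((b - (a+1)) + (m - b)) := by omega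
        _ ≤ (UU C a).card + (((Finset.Ico (a+1) b).biUnion C).card +
              ((Finset.Ico (b+1) m).biUnion C).card) :=
            Nat.add_le_add hcbL (Nat.add_le_add hmid hcbR)
        _ = (UU C a).card + (((Finset.Ico (a+1) b).biUnion C) ∪
              ((Finset.Ico (b+1) m).biUnion C)).card := by
            rw [Finset.card_union_of_disjoint d23]
        _ = ((UU C a) ∪ (((Finset.Ico (a+1) b).biUnion C) ∪
              ((Finset.Ico (b+1) m).biUnion C))).card :=
            (Finset.card_union_of_disjoint d1_23).symm
        _ ≤ (UU C m).card := by
            apply Finset.card_le_card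
            refine Finset.union_subset (UU_mono (by omega)) ?_
            exact Finset.union_subset (Ico_biUnion_subset_UU.trans (UU_mono (by omega)))
              Ico_biUnion_subset_UU

/-- The path lower bound: any path representation of length `m` uses at least `m` elements. -/
theorem pathA : ∀ (m : ℕ) (C : ℕ → Finset ℕ), PR C m → m ≤ (UU C m).card := by
  intro m
  induction m using Nat.strong_induction_on with
  | _ m IH =>
  intro C hC
  rcases Nat.lt_or_ge m 4 with hm4 | hm4
  · rcases Nat.lt_or_ge m 2 with hm2 | hm2
    · rcases Nat.lt_or_ge m 1 with hm1 | hm1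
      · omega
      · have hm : m = 1 := by omega
        subst hm
        have h := hC.1 0 (by omega)
        calc 1 ≤ (C 0).card := Finset.card_pos.2 h
          _ ≤ (UU C 1).card := Finset.card_le_card (subset_UU (by omega))
    · have h3 := ov_card3 (hC.2.1 0 (by omega))
      simp only [Nat.zero_add] at h3
      have hsub : C 0 ∪ C 1 ⊆ UU C m :=
        Finset.union_subset (subset_UU (by omega)) (subset_UU (by omega))
      have := Finset.card_le_card hsub
      omega
  · have Arec : ∀ ℓ (C' : ℕ → Finset ℕ), ℓ < m → PR C' ℓ → ℓ ≤ (UU C' ℓ).card :=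
      fun ℓ C' hℓ h => IH ℓ hℓ C' h
    by_cases hlazy : C (m-1) ⊆ UU C (m-1)
    · by_contra hlt
      push_neg at hlt
      have hUeq : UU C m = UU C (m-1) := by
        apply Finset.Subset.antisymm ?_ (UU_mono (by omega))
        intro x hx
        obtain ⟨i, hi, hxi⟩ := mem_UU.1 hx
        rcases Nat.lt_or_ge i (m-1) with h | h
        · exact mem_UU.2 ⟨i, h, hxi⟩
        · have : i = m - 1 := by omega
          subst this
          exact hlazy hxi
      have hpre : (UU C (m-1)).card = m - 1 := by
        have h1 := Arec (m-1) C (by omega) (hC.mono (by omega))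
        rw [hUeq] at hlt
        omega
      have hB := clauseB (m-1) C (fun ℓ C' hℓ h => Arec ℓ C' (by omega) h)
        (hC.mono (by omega)) (by omega) hpre
      rw [(show m - 1 - 1 = m - 2 by omega)] at hB
      have hov : Overlaps (C (m-2)) (C (m-1)) := ov_cons hC (by omega) (by omega)
      obtain ⟨x, hx1, hx2⟩ := Finset.not_subset.1 hov.2.2
      obtain ⟨i, hi, hxi⟩ := mem_UU.1 (hlazy hx1)
      have hneq : i ≠ m - 2 := fun h => hx2 (h ▸ hxi)
      have hne : (C i ∩ C (m-1)).Nonempty := ⟨x, Finset.mem_inter.2 ⟨hxi, hx1⟩⟩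
      rcases not_ov_cases (hC.2.2 i (m-1) (by omega) (by omega)) hne with hs | hs
      · have hprop := prop_right hC (p := i) (q := m-1) (by omega) (by omega) hs
        refine hov.2.1 (hB.trans ?_)
        intro y hy
        obtain ⟨k, hk, hky⟩ := mem_UU.1 hy
        exact hprop k (by omega) hky
      · have hprop := prop_left hC (p := i) (q := m-1) (by omega) (by omega) hs
        have hmas := master Arec hC hm4 (i + 1) 1 i (by omega) (by omega) (by omega)
          (by omega) (Or.inr (by omega))
          (fun k hk => absurd hk (by omega)) (fun k hk hkm => hprop k hk hkm)
        omega
    · have hlt2 := card_lt_of_not_subset (m := m) (by omega) hlazy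
      have := Arec (m-1) C (by omega) (hC.mono (by omega))
      omega

/-! ### Cycle graph adjacency facts -/

lemma fin_sub_val {n : ℕ} (a b : Fin n) : (a - b).val = (n - b.val + a.val) % n := by
  rw [Fin.sub_def]

lemma cyc_adj_iff {n : ℕ} (hn : 4 ≤ n) {i j : ℕ} (hi : i < n) (hj : j < n) (hij : i < j) :
    (SimpleGraph.cycleGraph n).Adj ⟨i, hi⟩ ⟨j, hj⟩ ↔ (j = i + 1 ∨ (i = 0 ∧ j = n - 1)) := by
  rw [SimpleGraph.cycleGraph_adj']
  rw [fin_sub_val, fin_sub_val]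
  simp only
  constructor
  · rintro (h | h)
    · -- (n - j + i) % n = 1
      have hlt : n - j + i < n ∨ (n - j + i = n) := by omega
      rcases hlt with hlt | heqn
      · rw [Nat.mod_eq_of_lt hlt] at h
        right
        omega
      · rw [heqn, Nat.mod_self] at h
        omega
    · -- (n - i + j) % n = 1
      have hsplit : n - i + j = (j - i) + n ∨ n - i + j < n := by omega
      rcases hsplit with heq | hlt
      · rw [heq, Nat.add_mod_right, Nat.mod_eq_of_lt (by omega)] at h
        left
        omega
      · omega
  · rintro (rfl | ⟨rfl, rfl⟩)
    · right
      have heq : n - i + (i + 1) = 1 + n := by omega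
      rw [heq, Nat.add_mod_right, Nat.mod_eq_of_lt (by omega)]
    · left
      have heq : n - (n-1) + 0 = 1 := by omega
      rw [heq, Nat.mod_eq_of_lt (by omega)]

lemma union_eq_coe {n : ℕ} (S : Fin n → Finset ℕ) :
    (⋃ v, (S v : Set ℕ)) = ((Finset.univ.biUnion S : Finset ℕ) : Set ℕ) := by
  ext x
  simp [Finset.mem_biUnion]

/-- Lower bound for cycle representations. -/
lemma cycle_lower {n : ℕ} (hn : 4 ≤ n) (S : Fin n → Finset ℕ)
    (hrep : IsOverlapRep (SimpleGraph.cycleGraph n) S) :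
    n - 1 ≤ (Finset.univ.biUnion S).card := by
  classical
  set C : ℕ → Finset ℕ := fun i => if h : i < n then S ⟨i, h⟩ else {0} with hCdef
  have hCeq : ∀ i (h : i < n), C i = S ⟨i, h⟩ := by
    intro i h
    simp only [hCdef, dif_pos h]
  have hPR : PR C (n-1) := by
    refine ⟨fun i hi => ?_, fun i hi => ?_, fun i j hij hj => ?_⟩
    · rw [hCeq i (by omega)]
      exact hrep.1 _
    · rw [hCeq i (by omega), hCeq (i+1) (by omega)]
      rw [← hrep.2]
      rw [cyc_adj_iff hn (by omega) (by omega) (by omega)]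
      left; rfl
    · rw [hCeq i (by omega), hCeq j (by omega)]
      rw [← hrep.2]
      rw [cyc_adj_iff hn (by omega) (by omega) (by omega)]
      push_neg
      omega
  have hbound := pathA (n-1) C hPR
  have hsub : UU C (n-1) ⊆ Finset.univ.biUnion S := by
    intro x hx
    obtain ⟨i, hi, hxi⟩ := mem_UU.1 hx
    rw [hCeq i (by omega)] at hxi
    rw [Finset.mem_biUnion]
    exact ⟨⟨i, by omega⟩, Finset.mem_univ _, hxi⟩
  calc n - 1 ≤ (UU C (n-1)).card := hbound
    _ ≤ (Finset.univ.biUnion S).card := Finset.card_le_card hsub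

/-! ### Upper bound construction -/

lemma mk_ov {A B : Finset ℕ} (z a b : ℕ) (hz1 : z ∈ A) (hz2 : z ∈ B)
    (ha1 : a ∈ A) (ha2 : a ∉ B) (hb1 : b ∈ B) (hb2 : b ∉ A) : Overlaps A B :=
  ⟨⟨z, Finset.mem_inter.2 ⟨hz1, hz2⟩⟩, fun h => ha2 (h ha1), fun h => hb2 (h hb1)⟩

lemma not_ov_of_subset {A B : Finset ℕ} (h : A ⊆ B) : ¬ Overlaps A B :=
  fun hov => hov.2.1 h

lemma not_ov_of_disjoint {A B : Finset ℕ} (h : ∀ x, x ∈ A → x ∉ B) : ¬ Overlaps A B := by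
  intro hov
  obtain ⟨z, hz⟩ := hov.1
  rw [Finset.mem_inter] at hz
  exact h z hz.1 hz.2

lemma ov_comm {A B : Finset ℕ} : Overlaps A B ↔ Overlaps B A := ⟨ov_symm, ov_symm⟩

/-- The sets of the optimal representation of the cycle, as a function of the vertex value. -/
def cycSfun (n i : ℕ) : Finset ℕ :=
  if i + 3 ≤ n then {i+1, i+2}
  else if i + 2 = n then Finset.Icc 1 (n-2)
  else Finset.Icc 2 (n-1)

lemma cyc_ov_iff {n i j : ℕ} (hn : 4 ≤ n) (hj : j < n) (hij : i < j) :
    Overlaps (cycSfun n i) (cycSfun n j) ↔ (j = i + 1 ∨ (i = 0 ∧ j = n - 1)) := by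
  constructor
  · intro hov
    by_contra hc
    push_neg at hc
    obtain ⟨hc1, hc2⟩ := hc
    have hij2 : i + 2 ≤ j := by omega
    have hin : i = 0 → j ≠ n - 1 := hc2
    have hij3 : j ≤ n - 2 ∨ 1 ≤ i := by
      by_cases hi0 : i = 0
      · have := hin hi0
        omega
      · omega
    have hA : cycSfun n i = {i+1, i+2} := by
      unfold cycSfun
      rw [if_pos (by omega)]
    by_cases hj3 : j + 3 ≤ n
    · have hB : cycSfun n j = {j+1, j+2} := by
        unfold cycSfun; rw [if_pos hj3]
      rw [hA, hB] at hov
      refine absurd hov (not_ov_of_disjoint ?_)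
      intro x hx hx2
      simp only [Finset.mem_insert, Finset.mem_singleton] at hx hx2
      omega
    · by_cases hj2 : j + 2 = n
      · have hB : cycSfun n j = Finset.Icc 1 (n-2) := by
          unfold cycSfun; rw [if_neg hj3, if_pos hj2]
        rw [hA, hB] at hov
        refine absurd hov (not_ov_of_subset ?_)
        intro x hx
        simp only [Finset.mem_insert, Finset.mem_singleton] at hx
        rw [Finset.mem_Icc]
        omega
      · have hi1 : 1 ≤ i := by omega
        have hB : cycSfun n j = Finset.Icc 2 (n-1) := by
          unfold cycSfun; rw [if_neg hj3, if_neg hj2]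
        rw [hA, hB] at hov
        refine absurd hov (not_ov_of_subset ?_)
        intro x hx
        simp only [Finset.mem_insert, Finset.mem_singleton] at hx
        rw [Finset.mem_Icc]
        omega
  · intro h
    rcases h with rfl | ⟨rfl, rfl⟩
    · -- j = i + 1
      by_cases h4 : i + 4 ≤ n
      · have hA : cycSfun n i = {i+1, i+2} := by
          unfold cycSfun; rw [if_pos (by omega)]
        have hB : cycSfun n (i+1) = {i+2, i+3} := by
          unfold cycSfun; rw [if_pos (by omega)]
        rw [hA, hB]
        refine mk_ov (i+2) (i+1) (i+3) (by simp) (by simp) (by simp) ?_ (by simp) ?_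
        · simp only [Finset.mem_insert, Finset.mem_singleton]; omega
        · simp only [Finset.mem_insert, Finset.mem_singleton]; omega
      · by_cases h3 : i + 3 ≤ n
        · -- i = n - 3, j = n - 2
          have hA : cycSfun n i = {i+1, i+2} := by
            unfold cycSfun; rw [if_pos (by omega)]
          have hB : cycSfun n (i+1) = Finset.Icc 1 (n-2) := by
            unfold cycSfun; rw [if_neg (by omega), if_pos (by omega)]
          rw [hA, hB]
          refine mk_ov (i+1) (i+2) 1 (by simp) ?_ (by simp) ?_ ?_ ?_
          · rw [Finset.mem_Icc]; omega
          · rw [Finset.mem_Icc]; omega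
          · rw [Finset.mem_Icc]; omega
          · simp only [Finset.mem_insert, Finset.mem_singleton]; omega
        · -- i = n - 2, j = n - 1
          have hA : cycSfun n i = Finset.Icc 1 (n-2) := by
            unfold cycSfun; rw [if_neg (by omega), if_pos (by omega)]
          have hB : cycSfun n (i+1) = Finset.Icc 2 (n-1) := by
            unfold cycSfun; rw [if_neg (by omega), if_neg (by omega)]
          rw [hA, hB]
          refine mk_ov 2 1 (n-1) ?_ ?_ ?_ ?_ ?_ ?_ <;> rw [Finset.mem_Icc] <;> omega
    · -- i = 0, j = n - 1
      have hA : cycSfun n 0 = {1, 2} := by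
        unfold cycSfun; rw [if_pos (by omega)]
      have hB : cycSfun n (n-1) = Finset.Icc 2 (n-1) := by
        unfold cycSfun; rw [if_neg (by omega), if_neg (by omega)]
      rw [hA, hB]
      refine mk_ov 2 1 3 (by simp) ?_ (by simp) ?_ ?_ ?_
      · rw [Finset.mem_Icc]; omega
      · rw [Finset.mem_Icc]; omega
      · rw [Finset.mem_Icc]; omega
      · simp only [Finset.mem_insert, Finset.mem_singleton]; omega

lemma cycS_rep {n : ℕ} (hn : 4 ≤ n) :
    IsOverlapRep (SimpleGraph.cycleGraph n) (fun v : Fin n => cycSfun n v.val) := by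
  constructor
  · intro v
    show (cycSfun n v.val).Nonempty
    unfold cycSfun
    split_ifs with h1 h2
    · exact ⟨v.val + 1, by simp⟩
    · exact ⟨1, by rw [Finset.mem_Icc]; omega⟩
    · exact ⟨2, by rw [Finset.mem_Icc]; omega⟩
  · intro u v
    obtain ⟨i, hi⟩ := u
    obtain ⟨j, hj⟩ := v
    show _ ↔ Overlaps (cycSfun n i) (cycSfun n j)
    rcases lt_trichotomy i j with hij | hij | hij
    · rw [cyc_adj_iff hn hi hj hij]
      exact (cyc_ov_iff hn hj hij).symm
    · subst hij
      constructor
      · intro h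
        exact ((SimpleGraph.cycleGraph n).loopless.irrefl _ h).elim
      · intro h
        exact (h.2.1 (Finset.Subset.refl _)).elim
    · rw [SimpleGraph.adj_comm]
      rw [cyc_adj_iff hn hj hi hij]
      rw [ov_comm]
      exact (cyc_ov_iff hn hi hij).symm

lemma cycS_union {n : ℕ} (hn : 4 ≤ n) :
    Finset.univ.biUnion (fun v : Fin n => cycSfun n v.val) = Finset.Icc 1 (n-1) := by
  apply Finset.Subset.antisymm
  · intro x hx
    rw [Finset.mem_biUnion] at hx
    obtain ⟨v, _, hxv⟩ := hx
    rw [Finset.mem_Icc]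
    have hv := v.isLt
    unfold cycSfun at hxv
    split_ifs at hxv with h1 h2
    · simp only [Finset.mem_insert, Finset.mem_singleton] at hxv
      omega
    · rw [Finset.mem_Icc] at hxv; omega
    · rw [Finset.mem_Icc] at hxv; omega
  · intro x hx
    rw [Finset.mem_Icc] at hx
    rw [Finset.mem_biUnion]
    rcases Nat.lt_or_ge x (n-1) with hx2 | hx2
    · refine ⟨⟨n-2, by omega⟩, Finset.mem_univ _, ?_⟩
      show x ∈ cycSfun n (n-2)
      have hB : cycSfun n (n-2) = Finset.Icc 1 (n-2) := by
        unfold cycSfun; rw [if_neg (by omega), if_pos (by omega)]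
      rw [hB, Finset.mem_Icc]
      omega
    · refine ⟨⟨n-1, by omega⟩, Finset.mem_univ _, ?_⟩
      show x ∈ cycSfun n (n-1)
      have hB : cycSfun n (n-1) = Finset.Icc 2 (n-1) := by
        unfold cycSfun; rw [if_neg (by omega), if_neg (by omega)]
      rw [hB, Finset.mem_Icc]
      omega

end OvPath

/-- For `n ≥ 4`, the overlap number of the cycle on `n` vertices is `n - 1`. -/
theorem overlapNumber_cycle (n : ℕ) (hn : 4 ≤ n) :
    overlapNumber (SimpleGraph.cycleGraph n) = n - 1 := by
  have hrepS := OvPath.cycS_rep (n := n) hn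
  have hmem : n - 1 ∈ {N | ∃ S : Fin n → Finset ℕ,
      IsOverlapRep (SimpleGraph.cycleGraph n) S ∧ (⋃ v, (S v : Set ℕ)).ncard = N} := by
    refine ⟨_, hrepS, ?_⟩
    rw [OvPath.union_eq_coe, Set.ncard_coe_finset, OvPath.cycS_union hn, Nat.card_Icc]
    omega
  unfold overlapNumber
  apply le_antisymm
  · exact Nat.sInf_le hmem
  · apply le_csInf ⟨_, hmem⟩
    rintro N ⟨S, hrep, hcard⟩
    have hlow := OvPath.cycle_lower hn S hrep
    rw [OvPath.union_eq_coe, Set.ncard_coe_finset] at hcard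
    omega
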